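/- (Rihanna's Lemma) For n ≥ 1: given any oddly acyclic orientation of the subgraph 𝒢_{n−1} of 𝒢_n and any orientation of the controlling edges of 𝒢_n, there exists a unique orientation of 𝒢_n extending both which is oddly acyclic. -/
import Mathlib


/-- An orientation of `𝒢_n`: `o A b = true` means the edge between `A` and
`insert b A` is directed from `A` to `insert b A` (only relevant when `b ∉ A`). -/
def GraphOrientation (n : ℕ) : Type := Finset (Fin (n + 1)) → Fin (n + 1) → Bool

/-- The diamond `𝒟(C,a,b)` (on vertices `C`, `C∪{a}`, `C∪{b}`, `C∪{a,b}`), with the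
directions induced by the orientation `o`, is acyclic and contains a directed path of
length 3.  For an orientation of a 4-cycle, this holds precisely when an odd number of
the four edges point "upwards". -/
def OddlyAcyclicDiamond {n : ℕ} (o : GraphOrientation n) (C : Finset (Fin (n + 1)))
    (a b : Fin (n + 1)) : Prop :=
  xor (o C a) (xor (o C b) (xor (o (insert a C) b) (o (insert b C) a))) = true

/-- `o` is an oddly acyclic orientation of `𝒢_n`. -/
def OddlyAcyclic {n : ℕ} (o : GraphOrientation n) : Prop :=
  ∀ (C : Finset (Fin (n + 1))) (a b : Fin (n + 1)),
    a ∉ C → b ∉ C → a ≠ b → OddlyAcyclicDiamond o C a b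

/-- Rihanna's Lemma: given an oddly acyclic orientation `o'` of the
subgraph `𝒢_{n-1}` (the induced subgraph on subsets not containing `n = Fin.last n`)
and an arbitrary orientation `c` of the controlling edges (`c A` is the direction of
the edge between `A` and `A ∪ {n}`, for `n ∉ A`), there is a unique oddly acyclic
orientation of `𝒢_n` extending both. -/

private lemma rih_x1 : ∀ p t u : Bool,
    xor p (xor t (xor u (!(xor p (xor t u))))) = true := by decide

private lemma rih_x1' : ∀ p t u : Bool,
    xor t (xor p (xor (!(xor p (xor t u))) u)) = true := by decide

private lemma rih_x2 : ∀ p q r s t u v w : Bool,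
    xor p (xor q (xor r s)) = true →
    xor (!(xor p (xor t u))) (xor (!(xor q (xor t v)))
      (xor (!(xor r (xor u w))) (!(xor s (xor v w))))) = true := by decide

private lemma rih_uniq : ∀ q t v x : Bool,
    xor q (xor t (xor v x)) = true → x = !(xor q (xor t v)) := by decide

theorem rihanna (n : ℕ) (hn : 1 ≤ n) (o' : GraphOrientation n)
    (h' : ∀ (C : Finset (Fin (n + 1))) (a b : Fin (n + 1)),
      Fin.last n ∉ C → a ≠ Fin.last n → b ≠ Fin.last n →
      a ∉ C → b ∉ C → a ≠ b → OddlyAcyclicDiamond o' C a b)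
    (c : Finset (Fin (n + 1)) → Bool) :
    ∃ o : GraphOrientation n,
      ((∀ (A : Finset (Fin (n + 1))) (b : Fin (n + 1)),
          b ∉ A → b ≠ Fin.last n → Fin.last n ∉ A → o A b = o' A b) ∧
        (∀ A : Finset (Fin (n + 1)), Fin.last n ∉ A → o A (Fin.last n) = c A) ∧
        OddlyAcyclic o) ∧
      ∀ o₂ : GraphOrientation n,
        ((∀ (A : Finset (Fin (n + 1))) (b : Fin (n + 1)),
            b ∉ A → b ≠ Fin.last n → Fin.last n ∉ A → o₂ A b = o' A b) ∧
          (∀ A : Finset (Fin (n + 1)), Fin.last n ∉ A → o₂ A (Fin.last n) = c A) ∧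
          OddlyAcyclic o₂) →
        ∀ (A : Finset (Fin (n + 1))) (b : Fin (n + 1)), b ∉ A → o₂ A b = o A b := by
  classical
  set L := Fin.last n with hL
  set o : GraphOrientation n := fun A b =>
    if L ∈ A then
      !(xor (o' (A.erase L) b) (xor (c (A.erase L)) (c (insert b (A.erase L)))))
    else if b = L then c A else o' A b with ho
  have hv1 : ∀ A b, L ∉ A → b ≠ L → o A b = o' A b := by
    intro A b hLA hbL; simp [ho, hLA, hbL]
  have hv2 : ∀ A, L ∉ A → o A L = c A := by
    intro A hLA; simp [ho, hLA]
  have hv3 : ∀ A b, L ∈ A →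
      o A b = !(xor (o' (A.erase L) b)
        (xor (c (A.erase L)) (c (insert b (A.erase L))))) := by
    intro A b hLA; simp [ho, hLA]
  refine ⟨o, ⟨fun A b _ hbL hLA => hv1 A b hLA hbL, hv2, ?_⟩, ?_⟩
  · intro C a b ha hb hab
    unfold OddlyAcyclicDiamond
    by_cases hLC : L ∈ C
    · have haL : a ≠ L := fun h => ha (h ▸ hLC)
      have hbL : b ≠ L := fun h => hb (h ▸ hLC)
      have hLa : L ∈ insert a C := Finset.mem_insert_of_mem hLC
      have hLb : L ∈ insert b C := Finset.mem_insert_of_mem hLC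
      have hea : (insert a C).erase L = insert a (C.erase L) :=
        Finset.erase_insert_of_ne haL
      have heb : (insert b C).erase L = insert b (C.erase L) :=
        Finset.erase_insert_of_ne hbL
      have hd := h' (C.erase L) a b (Finset.notMem_erase _ _) haL hbL
        (fun h => ha (Finset.mem_of_mem_erase h))
        (fun h => hb (Finset.mem_of_mem_erase h)) hab
      unfold OddlyAcyclicDiamond at hd
      rw [hv3 C a hLC, hv3 C b hLC, hv3 (insert a C) b hLa,
        hv3 (insert b C) a hLb, hea, heb,
        Finset.insert_comm a b (C.erase L)]
      exact rih_x2 _ _ _ _ _ _ _ _ hd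
    · have he2 : (insert L C).erase L = C := Finset.erase_insert hLC
      by_cases haL : a = L
      · subst haL
        have hbL : b ≠ L := fun h => hab h.symm
        have h1 : L ∉ insert b C := by
          simp only [Finset.mem_insert]
          exact fun h => h.elim (fun h => hbL h.symm) hLC
        rw [hv2 C hLC, hv1 C b hLC hbL, hv3 (insert L C) b
          (Finset.mem_insert_self _ _), hv2 (insert b C) h1, he2]
        exact rih_x1' _ _ _
      · by_cases hbL : b = L
        · subst hbL
          have h1 : L ∉ insert a C := by
            simp only [Finset.mem_insert]
            exact fun h => h.elim (fun h => haL h.symm) hLC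
          rw [hv1 C a hLC haL, hv2 C hLC, hv2 (insert a C) h1,
            hv3 (insert L C) a (Finset.mem_insert_self _ _), he2]
          exact rih_x1 _ _ _
        · have h1 : L ∉ insert a C := by
            simp only [Finset.mem_insert]
            exact fun h => h.elim (fun h => haL h.symm) hLC
          have h2 : L ∉ insert b C := by
            simp only [Finset.mem_insert]
            exact fun h => h.elim (fun h => hbL h.symm) hLC
          have hd := h' C a b hLC haL hbL ha hb hab
          unfold OddlyAcyclicDiamond at hd
          rw [hv1 C a hLC haL, hv1 C b hLC hbL,
            hv1 (insert a C) b h1 hbL, hv1 (insert b C) a h2 haL]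
          exact hd
  · rintro o₂ ⟨he, hc, hoa⟩ A b hb
    by_cases hLA : L ∈ A
    · have hbL : b ≠ L := fun h => hb (h ▸ hLA)
      have hbD : b ∉ A.erase L := fun h => hb (Finset.mem_of_mem_erase h)
      have hLD : L ∉ A.erase L := Finset.notMem_erase _ _
      have hd := hoa (A.erase L) b L hbD hLD hbL
      unfold OddlyAcyclicDiamond at hd
      have hLi : L ∉ insert b (A.erase L) := by
        simp only [Finset.mem_insert]
        exact fun h => h.elim (fun h => hbL h.symm) hLD
      rw [he _ _ hbD hbL hLD, hc _ hLD, hc _ hLi,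
        Finset.insert_erase hLA] at hd
      rw [hv3 A b hLA]
      exact rih_uniq _ _ _ _ hd
    · by_cases hbL : b = L
      · subst hbL
        rw [hv2 A hLA]
        exact hc A hLA
      · rw [hv1 A b hLA hbL]
        exact he A b hb hbL hLA
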